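/- Let x⊗h and y⊗k be infinitesimal transvections on a finite-dimensional vector space V over a field F of characteristic not 2, with F·x ≠ F·y and ker h ≠ ker k. If h(y) ≠ 0 and k(x) ≠ 0, then the Lie subalgebra of gl(V) generated by x⊗h and y⊗k is isomorphic to sl₂(F). -/

import Mathlib

attribute [local instance 100] LieRing.ofAssociativeRing

open LieAlgebra.SpecialLinear

section aux
variable {F L : Type*} [Field F] [LieRing L] [LieAlgebra F L]

lemma sl2_val11 (A : sl (Fin 2) F) : A.val 1 1 = - A.val 0 0 := by
  have : Matrix.trace (A.val) = 0 := A.2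
  simp only [Matrix.trace, Matrix.diag, Fin.sum_univ_two] at this
  linear_combination this

/-- auxiliary: a Lie algebra hom from `sl₂` determined by an sl₂-triple. -/
noncomputable def sl2HomAux (H E Fv : L)
    (hHE : ⁅H, E⁆ = (2:F) • E) (hHF : ⁅H, Fv⁆ = (-2:F) • Fv)
    (hEF : ⁅E, Fv⁆ = H) : sl (Fin 2) F →ₗ⁅F⁆ L where
  toFun A := A.val 0 0 • H + A.val 0 1 • E + A.val 1 0 • Fv
  map_add' A B := by
    show (A.val + B.val) 0 0 • H + (A.val + B.val) 0 1 • E + (A.val + B.val) 1 0 • Fv = _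
    simp only [Matrix.add_apply, add_smul]
    abel
  map_smul' c A := by
    show (c • A.val) 0 0 • H + (c • A.val) 0 1 • E + (c • A.val) 1 0 • Fv = _
    simp only [Matrix.smul_apply, smul_eq_mul, mul_smul, smul_add, RingHom.id_apply]
  map_lie' {A B} := by
    have hA := sl2_val11 A
    have hB := sl2_val11 B
    have hEH : ⁅E, H⁆ = (-2:F) • E := by rw [← lie_skew, hHE]; module
    have hFH : ⁅Fv, H⁆ = (2:F) • Fv := by rw [← lie_skew, hHF]; module
    have hFE : ⁅Fv, E⁆ = -H := by rw [← lie_skew, hEF]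
    have hbr : (⁅A, B⁆ : sl (Fin 2) F).val = A.val * B.val - B.val * A.val := rfl
    show (⁅A, B⁆ : sl (Fin 2) F).val 0 0 • H + _ + _ = _
    simp only [hbr, Matrix.sub_apply, Matrix.mul_apply, Fin.sum_univ_two, hA, hB,
      lie_add, add_lie, lie_smul, smul_lie, hHE, hHF, hEF, hEH, hFH, hFE, lie_self]
    match_scalars <;> ring
end aux

theorem transvection_pair_sl2 {F V : Type*} [Field F]
    [AddCommGroup V] [Module F V] [FiniteDimensional F V]
    (h2 : (2 : F) ≠ 0) (x y : V) (h k : Module.Dual F V)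
    (hx : x ≠ 0) (hy : y ≠ 0) (hh : h ≠ 0) (hk : k ≠ 0)
    (hhx : h x = 0) (hky : k y = 0)
    (hcentres : (Submodule.span F {x} : Submodule F V) ≠ Submodule.span F {y})
    (haxes : LinearMap.ker h ≠ LinearMap.ker k)
    (hhy : h y ≠ 0) (hkx : k x ≠ 0) :
    Nonempty
      ((LieSubalgebra.lieSpan F (Module.End F V) {h.smulRight x, k.smulRight y}) ≃ₗ⁅F⁆
        LieAlgebra.SpecialLinear.sl (Fin 2) F) := by
  classical
  set e : Module.End F V := h.smulRight x with he
  set f : Module.End F V := k.smulRight y with hf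
  set lam : F := h y * k x with hlam
  have hlam0 : lam ≠ 0 := mul_ne_zero hhy hkx
  have hef_app : ∀ v, ⁅e, f⁆ v = (h y * k v) • x - (k x * h v) • y := by
    intro v
    simp only [LieRing.of_associative_ring_bracket, LinearMap.sub_apply, Module.End.mul_apply,
      he, hf, LinearMap.smulRight_apply, map_smul, smul_smul, smul_eq_mul]
    match_scalars <;> ring
  set H' : Module.End F V := lam⁻¹ • ⁅e, f⁆ with hH'
  set Fv : Module.End F V := lam⁻¹ • f with hFv
  -- the three sl₂ relations
  have key1 : ⁅⁅e,f⁆, e⁆ = (2 * lam) • e := by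
    ext v
    have h1 : ⁅e,f⁆ (e v) = (h v) • (⁅e,f⁆ x) := by
      rw [he]; simp only [LinearMap.smulRight_apply, map_smul]
    rw [LieRing.of_associative_ring_bracket, LinearMap.sub_apply, Module.End.mul_apply,
      Module.End.mul_apply, h1, hef_app, hef_app]
    simp only [he, LinearMap.smul_apply, LinearMap.smulRight_apply, map_sub, map_smul,
      smul_eq_mul, hhx, hhy, hlam]
    match_scalars <;> ring
  have key2 : ⁅⁅e,f⁆, f⁆ = (-(2 * lam)) • f := by
    ext v
    have h1 : ⁅e,f⁆ (f v) = (k v) • (⁅e,f⁆ y) := by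
      rw [hf]; simp only [LinearMap.smulRight_apply, map_smul]
    rw [LieRing.of_associative_ring_bracket, LinearMap.sub_apply, Module.End.mul_apply,
      Module.End.mul_apply, h1, hef_app, hef_app]
    simp only [hf, LinearMap.smul_apply, LinearMap.smulRight_apply, map_sub, map_smul,
      smul_eq_mul, hky, hlam]
    match_scalars <;> ring
  have hHE : ⁅H', e⁆ = (2:F) • e := by
    rw [hH', smul_lie, key1, smul_smul]
    congr 1
    field_simp
  have hHF : ⁅H', Fv⁆ = (-2:F) • Fv := by
    rw [hH', hFv, smul_lie, lie_smul, key2, smul_smul, smul_smul, smul_smul]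
    congr 1
    field_simp
  have hEF : ⁅e, Fv⁆ = H' := by rw [hFv, lie_smul, hH']
  set φ : LieAlgebra.SpecialLinear.sl (Fin 2) F →ₗ⁅F⁆ Module.End F V :=
    sl2HomAux H' e Fv hHE hHF hEF with hφ
  have hφ_apply : ∀ A, φ A = A.val 0 0 • H' + A.val 0 1 • e + A.val 1 0 • Fv := fun _ => rfl
  -- evaluations
  have hefx : ⁅e,f⁆ x = lam • x := by
    rw [hef_app x, hhx]; match_scalars <;> ring
  have hefy : ⁅e,f⁆ y = (-lam) • y := by
    rw [hef_app y, hky]; match_scalars <;> ring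
  have hH'x : H' x = x := by
    rw [hH', LinearMap.smul_apply, hefx, smul_smul, inv_mul_cancel₀ hlam0, one_smul]
  have hH'y : H' y = -y := by
    rw [hH', LinearMap.smul_apply, hefy, smul_smul]
    rw [show lam⁻¹ * -lam = (-1 : F) by field_simp]; module
  have hex : e x = 0 := by rw [he]; simp [hhx]
  have hey : e y = h y • x := by rw [he]; simp
  have hfx : f x = k x • y := by rw [hf]; simp
  have hfy : f y = 0 := by rw [hf]; simp [hky]
  -- linear independence of x, y
  have hind : ∀ a b : F, a • x + b • y = 0 → a = 0 ∧ b = 0 := by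
    intro a b hab
    have h1 : a * k x = 0 := by
      have := congrArg k hab
      simpa [map_add, map_smul, hky, smul_eq_mul] using this
    have h2 : b * h y = 0 := by
      have := congrArg h hab
      simpa [map_add, map_smul, hhx, smul_eq_mul] using this
    exact ⟨(mul_eq_zero.mp h1).resolve_right hkx,
      (mul_eq_zero.mp h2).resolve_right hhy⟩
  -- injectivity
  have hinj : Function.Injective φ := by
    rw [show (φ : _ → _) = (φ.toLinearMap : _ → _) from rfl]
    rw [injective_iff_map_eq_zero]
    intro A hA0
    rw [LieHom.coe_toLinearMap, hφ_apply] at hA0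
    have hAx := congrArg (fun (g : Module.End F V) => g x) hA0
    have hAy := congrArg (fun (g : Module.End F V) => g y) hA0
    simp only [LinearMap.add_apply, LinearMap.smul_apply, hH'x, hH'y, hex, hey, hfx, hfy,
      hFv, smul_zero, add_zero, zero_add, smul_smul, LinearMap.zero_apply, smul_neg] at hAx hAy
    -- hAx : A00 • x + (A10 * (lam⁻¹ * k x)) • y = 0
    have hAx' : A.val 0 0 • x + (A.val 1 0 * (lam⁻¹ * k x)) • y = 0 := by
      rw [← hAx]; module
    have hAy' : (A.val 0 1 * h y) • x + (- A.val 0 0) • y = 0 := by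
      rw [← hAy]; module
    obtain ⟨ha, hc⟩ := hind _ _ hAx'
    obtain ⟨hb, -⟩ := hind _ _ hAy'
    have hc' : A.val 1 0 = 0 := by
      rcases mul_eq_zero.mp hc with h' | h'
      · exact h'
      · exact absurd h' (mul_ne_zero (inv_ne_zero hlam0) hkx)
    have hb' : A.val 0 1 = 0 := by
      rcases mul_eq_zero.mp hb with h' | h'
      · exact h'
      · exact absurd h' hhy
    have h11 : A.val 1 1 = 0 := by rw [sl2_val11, ha, neg_zero]
    ext i j
    fin_cases i <;> fin_cases j <;> simpa [ha, hb', hc', h11]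
  -- range
  have hel : e ∈ LieSubalgebra.lieSpan F (Module.End F V) {e, f} :=
    LieSubalgebra.subset_lieSpan (Set.mem_insert _ _)
  have hfl : f ∈ LieSubalgebra.lieSpan F (Module.End F V) {e, f} :=
    LieSubalgebra.subset_lieSpan (Set.mem_insert_of_mem _ rfl)
  have hrange : φ.range = LieSubalgebra.lieSpan F (Module.End F V) {e, f} := by
    apply le_antisymm
    · rintro z hz
      obtain ⟨A, rfl⟩ := (LieHom.mem_range φ _).mp hz
      rw [hφ_apply]
      have hHmem : H' ∈ LieSubalgebra.lieSpan F (Module.End F V) {e, f} := by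
        rw [hH']
        exact (LieSubalgebra.lieSpan F (Module.End F V) {e, f}).smul_mem _
          ((LieSubalgebra.lieSpan F (Module.End F V) {e, f}).lie_mem hel hfl)
      have hFmem : Fv ∈ LieSubalgebra.lieSpan F (Module.End F V) {e, f} := by
        rw [hFv]
        exact (LieSubalgebra.lieSpan F (Module.End F V) {e, f}).smul_mem _ hfl
      exact add_mem (add_mem
        ((LieSubalgebra.lieSpan F (Module.End F V) {e, f}).smul_mem _ hHmem)
        ((LieSubalgebra.lieSpan F (Module.End F V) {e, f}).smul_mem _ hel))
        ((LieSubalgebra.lieSpan F (Module.End F V) {e, f}).smul_mem _ hFmem)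
    · rw [LieSubalgebra.lieSpan_le]
      rintro z (rfl | rfl)
      · refine (LieHom.mem_range φ _).mpr ⟨⟨!![0,1;0,0], ?_⟩, ?_⟩
        · show Matrix.trace !![(0:F),1;0,0] = 0
          simp [Matrix.trace, Fin.sum_univ_two]
        · rw [hφ_apply]
          simp
      · refine (LieHom.mem_range φ _).mpr ⟨⟨!![0,0;lam,0], ?_⟩, ?_⟩
        · show Matrix.trace !![(0:F),0;lam,0] = 0
          simp [Matrix.trace, Fin.sum_univ_two]
        · rw [hφ_apply, hFv]
          simp [smul_smul, mul_inv_cancel₀ hlam0]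
  exact ⟨(LieEquiv.ofEq _ _ (by rw [hrange])).trans (LieEquiv.ofInjective φ hinj).symm⟩
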